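/- If the graph G_t is δ-trivial (i.e., |x_i(t) - x_j(t)| ≤ δ for all i, j ∈ [n]), then G_{t+1} is also δ-trivial, for every δ > 0. -/

import Mathlib

open Finset
open scoped Classical

/-- The threshold graph `G_t`: social neighbors whose garbage differs by at most `ε`. -/
def Gt {n : ℕ} (G : SimpleGraph (Fin n)) (x : ℕ → Fin n → ℝ) (ε : ℝ) (t : ℕ) :
    SimpleGraph (Fin n) where
  Adj i j := G.Adj i j ∧ |x t i - x t j| ≤ ε
  symm := by
    constructor
    intro i j h
    exact ⟨h.1.symm, by rw [abs_sub_comm]; exact h.2⟩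
  loopless := by
    constructor
    intro i h
    exact G.irrefl h.1

/-- `|E_t|`: the number of edges of `G_t`. -/
noncomputable def Ecard {n : ℕ} (G : SimpleGraph (Fin n)) (x : ℕ → Fin n → ℝ) (ε : ℝ)
    (t : ℕ) : ℕ :=
  (Gt G x ε t).edgeSet.ncard

/-- `N_i(t)`: the neighbors of `i` in `G_t`, as a finset. -/
noncomputable def Nb {n : ℕ} (G : SimpleGraph (Fin n)) (x : ℕ → Fin n → ℝ) (ε : ℝ)
    (t : ℕ) (i : Fin n) : Finset (Fin n) :=
  Finset.univ.filter fun j => (Gt G x ε t).Adj i j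

/-- The update rule of the garbage disposal game. -/
def Update {n : ℕ} (G : SimpleGraph (Fin n)) (x : ℕ → Fin n → ℝ) (ε : ℝ) : Prop :=
  ∀ t i,
    x (t + 1) i =
      (if (Gt G x ε t).edgeSet.Nonempty then (1 : ℝ) else 0) / (Ecard G x ε t : ℝ) *
          ∑ j ∈ Nb G x ε t i, x t j +
        (1 - ((Nb G x ε t i).card : ℝ) / (Ecard G x ε t : ℝ) *
            (if (Gt G x ε t).edgeSet.Nonempty then (1 : ℝ) else 0)) * x t i

/-- The Lyapunov functional `Z_t`. -/
noncomputable def Z {n : ℕ} (G : SimpleGraph (Fin n)) (x : ℕ → Fin n → ℝ) (ε : ℝ)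
    (t : ℕ) : ℝ :=
  ∑ i, ∑ j,
    max (min (ε ^ 2) ((x t i - x t j) ^ 2)) (ε ^ 2 * if ¬ G.Adj i j then 1 else 0)

/-- Lemma 2 (δ-trivial preserving): if `G_t` is δ-trivial then so is `G_{t+1}`. -/
theorem delta_trivial_preserving {n : ℕ} (G : SimpleGraph (Fin n)) (x : ℕ → Fin n → ℝ)
    (ε : ℝ) (hε : 0 < ε) (hx0 : ∀ i, 0 ≤ x 0 i) (hupd : Update G x ε)
    (δ : ℝ) (hδ : 0 < δ) (t : ℕ)
    (htriv : ∀ i j, |x t i - x t j| ≤ δ) :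
    ∀ i j, |x (t + 1) i - x (t + 1) j| ≤ δ := by
  intro i j
  have hne : (Finset.univ : Finset (Fin n)).Nonempty := ⟨i, Finset.mem_univ i⟩
  obtain ⟨kM, -, hkM⟩ := Finset.exists_max_image Finset.univ (x t) hne
  obtain ⟨km, -, hkm⟩ := Finset.exists_min_image Finset.univ (x t) hne
  -- degree bound
  have hdeg : ∀ a, (Nb G x ε t a).card ≤ Ecard G x ε t := by
    intro a
    have hfin := (Gt G x ε t).edgeSet.toFinite
    rw [Ecard, Set.ncard_eq_toFinset_card _ hfin]
    apply Finset.card_le_card_of_injOn (fun j => s(a, j))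
    · intro b hb
      simp only [Nb, Finset.mem_filter, Finset.mem_univ, true_and] at hb
      simpa [Set.Finite.mem_toFinset, SimpleGraph.mem_edgeSet] using hb
    · intro b hb c hc h
      simp only [Nb, Finset.mem_filter, Finset.mem_univ, true_and] at hb hc
      rw [Sym2.eq_iff] at h
      rcases h with ⟨-, h⟩ | ⟨h1, h2⟩
      · exact h
      · rw [h2, ← h1]
  -- each new value lies between m and M
  have hbound : ∀ a, x t km ≤ x (t + 1) a ∧ x (t + 1) a ≤ x t kM := by
    intro a
    rw [hupd t a]
    by_cases hE : (Gt G x ε t).edgeSet.Nonempty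
    · have hEpos : 0 < (Ecard G x ε t : ℝ) := by
        have : 0 < Ecard G x ε t :=
          (Set.ncard_pos ((Gt G x ε t).edgeSet.toFinite)).mpr hE
        exact_mod_cast this
      simp only [hE, if_true]
      set E : ℝ := (Ecard G x ε t : ℝ)
      set N : Finset (Fin n) := Nb G x ε t a
      have hcard : (N.card : ℝ) ≤ E := Nat.cast_le.mpr (hdeg a)
      have hw : 0 ≤ 1 - (N.card : ℝ) / E * 1 := by
        rw [mul_one, sub_nonneg, div_le_one hEpos]; exact hcard
      constructor
      · have hsum : (N.card : ℝ) * x t km ≤ ∑ j ∈ N, x t j := by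
          have := Finset.card_nsmul_le_sum N (x t) (x t km)
            (fun b _ => hkm b (Finset.mem_univ b))
          simpa [nsmul_eq_mul] using this
        have h1 : (N.card : ℝ) / E * x t km ≤ 1 / E * ∑ j ∈ N, x t j := by
          rw [div_mul_eq_mul_div, div_mul_eq_mul_div, one_mul,
            div_le_div_iff_of_pos_right hEpos]
          exact hsum
        have h2 : (1 - (N.card : ℝ) / E * 1) * x t km ≤
            (1 - (N.card : ℝ) / E * 1) * x t a :=
          mul_le_mul_of_nonneg_left (hkm a (Finset.mem_univ a)) hw
        nlinarith [h1, h2]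
      · have hsum : ∑ j ∈ N, x t j ≤ (N.card : ℝ) * x t kM := by
          have := Finset.sum_le_card_nsmul N (x t) (x t kM)
            (fun b _ => hkM b (Finset.mem_univ b))
          simpa [nsmul_eq_mul] using this
        have h1 : 1 / E * ∑ j ∈ N, x t j ≤ (N.card : ℝ) / E * x t kM := by
          rw [div_mul_eq_mul_div, div_mul_eq_mul_div, one_mul,
            div_le_div_iff_of_pos_right hEpos]
          exact hsum
        have h2 : (1 - (N.card : ℝ) / E * 1) * x t a ≤
            (1 - (N.card : ℝ) / E * 1) * x t kM :=
          mul_le_mul_of_nonneg_left (hkM a (Finset.mem_univ a)) hw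
        nlinarith [h1, h2]
    · simp only [hE, if_false]
      constructor
      · simpa using hkm a (Finset.mem_univ a)
      · simpa using hkM a (Finset.mem_univ a)
  have hi := hbound i
  have hj := hbound j
  have hmM : x t kM - x t km ≤ δ :=
    le_trans (le_abs_self _) (htriv kM km)
  rw [abs_le]
  constructor <;> [skip; skip] <;> nlinarith [hi.1, hi.2, hj.1, hj.2, hmM]
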